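/- Let G be a connected graph and let H be a hypergraph of degree at most 2. If G is a minor of the dual hypergraph H^d (i.e., of the primal graph of H^d), then the dual hypergraph G^d is a hypergraph dilution of H. -/

import Mathlib

namespace DilutionPaper

universe u v w

/-- A (finite) hypergraph: a finite vertex set together with a set of
hyperedges, each a subset of the vertex set. -/
structure Hypergraph (α : Type u) [DecidableEq α] where
  verts : Finset α
  edges : Finset (Finset α)
  valid : ∀ e ∈ edges, e ⊆ verts

variable {α : Type u} {β : Type v} {γ : Type w}
variable [DecidableEq α] [DecidableEq β] [DecidableEq γ]

namespace Hypergraph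

/-- The set `I_v` of edges incident to a vertex. -/
def incident (H : Hypergraph α) (vtx : α) : Finset (Finset α) :=
  H.edges.filter (fun e => vtx ∈ e)

/-- The degree of a hypergraph: the maximum degree of a vertex. -/
def degree (H : Hypergraph α) : ℕ :=
  H.verts.sup fun vtx => (H.incident vtx).card

/-- The rank: maximum cardinality of an edge. -/
def rank (H : Hypergraph α) : ℕ := H.edges.sup Finset.card

/-- Deletion of a vertex (from the vertex set and from all edges). -/
def deleteVertex (H : Hypergraph α) (vtx : α) : Hypergraph α where
  verts := H.verts.erase vtx
  edges := H.edges.image fun e => e.erase vtx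
  valid := by
    intro e he
    rcases Finset.mem_image.mp he with ⟨f, hf, rfl⟩
    intro x hx
    rcases Finset.mem_erase.mp hx with ⟨hx1, hx2⟩
    exact Finset.mem_erase.mpr ⟨hx1, H.valid f hf hx2⟩

/-- Deletion of an edge. -/
def deleteEdge (H : Hypergraph α) (f : Finset α) : Hypergraph α where
  verts := H.verts
  edges := H.edges.erase f
  valid := fun e he => H.valid e (Finset.mem_of_mem_erase he)

/-- The new edge `(⋃ I_v) \ {v}` created by merging on `v`. -/
def mergedEdge (H : Hypergraph α) (vtx : α) : Finset α :=
  ((H.incident vtx).biUnion id).erase vtx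

/-- Merging on a vertex `v`: replace all edges incident to `v` by the single
new edge `(⋃ I_v) \ {v}` (and remove `v` from the vertex set). -/
def merge (H : Hypergraph α) (vtx : α) : Hypergraph α where
  verts := H.verts.erase vtx
  edges := (H.edges \ H.incident vtx) ∪ {H.mergedEdge vtx}
  valid := by
    intro e he
    rcases Finset.mem_union.mp he with he | he
    · rcases Finset.mem_sdiff.mp he with ⟨heE, heI⟩
      intro x hx
      refine Finset.mem_erase.mpr ⟨?_, H.valid e heE hx⟩
      rintro rfl
      exact heI (Finset.mem_filter.mpr ⟨heE, hx⟩)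
    · rw [Finset.mem_singleton] at he
      subst he
      intro x hx
      rcases Finset.mem_erase.mp hx with ⟨hx1, hx2⟩
      rcases Finset.mem_biUnion.mp hx2 with ⟨f, hf, hxf⟩
      exact Finset.mem_erase.mpr ⟨hx1, H.valid f (Finset.mem_filter.mp hf).1 hxf⟩

/-- A single dilution operation. -/
inductive Step : Hypergraph α → Hypergraph α → Prop
  | deleteVertex (H : Hypergraph α) (vtx : α) (hv : vtx ∈ H.verts) :
      Step H (H.deleteVertex vtx)
  | deleteSubedge (H : Hypergraph α) (f e : Finset α) (hf : f ∈ H.edges)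
      (he : e ∈ H.edges) (hfe : f ⊂ e) : Step H (H.deleteEdge f)
  | merge (H : Hypergraph α) (vtx : α) (hv : vtx ∈ H.verts)
      (hne : (H.incident vtx).Nonempty) : Step H (H.merge vtx)

/-- Isomorphism of hypergraphs: a bijection on vertices inducing a bijection
on edges. -/
def Isomorphic (H : Hypergraph α) (G : Hypergraph β) : Prop :=
  ∃ φ : α → β, Set.BijOn φ ↑H.verts ↑G.verts ∧
    Set.BijOn (fun e : Finset α => e.image φ) ↑H.edges ↑G.edges

/-- `H'.DilutesTo H`: `H` is a hypergraph dilution of `H'`, i.e. `H` is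
isomorphic to a hypergraph reachable from `H'` by a finite sequence of
dilution operations. -/
def DilutesTo (H' : Hypergraph α) (H : Hypergraph β) : Prop :=
  ∃ K : Hypergraph α, Relation.ReflTransGen Step H' K ∧ K.Isomorphic H

/-- A tree decomposition of a hypergraph. -/
structure TreeDecomp (H : Hypergraph α) where
  ι : Type
  T : SimpleGraph ι
  isTree : T.IsTree
  bags : ι → Finset α
  bags_sub : ∀ u, bags u ⊆ H.verts
  cover : ∀ e ∈ H.edges, ∃ u, e ⊆ bags u
  link : ∀ vtx : α, (T.induce {u | vtx ∈ bags u}).Preconnected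

/-- The edge cover number `ρ(S)`: the least number of edges whose union
contains `S` (`⊤` if there is no such family). -/
noncomputable def edgeCoverNum (H : Hypergraph α) (S : Finset α) : ℕ∞ :=
  sInf {k : ℕ∞ | ∃ F : Finset (Finset α),
    F ⊆ H.edges ∧ (F.card : ℕ∞) = k ∧ S ⊆ F.biUnion id}

/-- The `ρ`-width of a tree decomposition. -/
noncomputable def TreeDecomp.ghwWidth {H : Hypergraph α} (td : TreeDecomp H) : ℕ∞ :=
  ⨆ u : td.ι, edgeCoverNum H (td.bags u)

/-- Generalised hypertree width. -/
noncomputable def ghw (H : Hypergraph α) : ℕ∞ :=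
  ⨅ td : TreeDecomp H, td.ghwWidth

/-- Treewidth. -/
noncomputable def tw (H : Hypergraph α) : ℕ∞ :=
  ⨅ td : TreeDecomp H, ⨆ u : td.ι, ((td.bags u).card : ℕ∞) - 1

/-- The dual hypergraph: vertices are the edges of `H`, edges are the
incidence sets `I_v`. -/
def dual (H : Hypergraph α) : Hypergraph (Finset α) where
  verts := H.edges
  edges := H.verts.image fun vtx => H.incident vtx
  valid := by
    intro e he
    rcases Finset.mem_image.mp he with ⟨vtx, -, rfl⟩
    intro f hf
    exact (Finset.mem_filter.mp hf).1

/-- A reduced hypergraph: no degree-0 vertex, no empty edge, and no two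
distinct vertices with the same incident edge set. -/
def IsReduced (H : Hypergraph α) : Prop :=
  (∀ vtx ∈ H.verts, (H.incident vtx).Nonempty) ∧
  (∅ ∉ H.edges) ∧
  ∀ vtx ∈ H.verts, ∀ w ∈ H.verts, H.incident vtx = H.incident w → vtx = w

/-- The hypergraph obtained from `H` by keeping only the vertices in `R`
(deleting all others from the vertex set and from all edges) and deleting
all (resulting) empty edges. -/
def reduceBy (H : Hypergraph α) (R : Finset α) : Hypergraph α where
  verts := R
  edges := (H.edges.image fun e => e ∩ R).filter fun e => e ≠ ∅
  valid := by
    intro e he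
    rcases Finset.mem_image.mp (Finset.mem_filter.mp he).1 with ⟨f, -, rfl⟩
    exact Finset.inter_subset_right

/-- `R` is a system of representatives witnessing that `H.reduceBy R` is the
reduced hypergraph of `H`: `R` consists of vertices of positive degree, one
for each class of vertices with identical incident edge sets. -/
def IsReductionRep (H : Hypergraph α) (R : Finset α) : Prop :=
  R ⊆ H.verts ∧
  (∀ vtx ∈ R, (H.incident vtx).Nonempty) ∧
  ∀ vtx ∈ H.verts, (H.incident vtx).Nonempty →
    ∃! w, w ∈ R ∧ H.incident w = H.incident vtx

/-- Adjacency in (the primal graph of) a hypergraph. -/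
def Adj (H : Hypergraph α) (x y : α) : Prop :=
  x ≠ y ∧ ∃ e ∈ H.edges, x ∈ e ∧ y ∈ e

/-- Connectedness of a hypergraph. -/
def Connected (H : Hypergraph α) : Prop :=
  H.verts.Nonempty ∧
  ∀ x ∈ H.verts, ∀ y ∈ H.verts, Relation.ReflTransGen H.Adj x y

/-- A graph, viewed as a 2-uniform hypergraph. -/
def IsGraph (H : Hypergraph α) : Prop := ∀ e ∈ H.edges, e.card = 2

/-- A set of vertices is connected (in the primal graph), staying inside the set. -/
def ConnectedIn (F : Hypergraph β) (S : Finset β) : Prop :=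
  ∀ x ∈ S, ∀ y ∈ S,
    Relation.ReflTransGen (fun a b => a ∈ S ∧ b ∈ S ∧ F.Adj a b) x y

/-- A minor map from the graph `G` into (the primal graph of) `F`. -/
def IsMinorMap (G : Hypergraph γ) (F : Hypergraph β) (μ : γ → Finset β) : Prop :=
  (∀ vtx ∈ G.verts, (μ vtx).Nonempty ∧ μ vtx ⊆ F.verts ∧ F.ConnectedIn (μ vtx)) ∧
  (∀ x ∈ G.verts, ∀ y ∈ G.verts, x ≠ y → μ x ∩ μ y = ∅) ∧
  ∀ x y : γ, G.Adj x y → ∃ a ∈ μ x, ∃ b ∈ μ y, F.Adj a b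

/-- `G` is a minor of (the primal graph of) `F`. -/
def IsMinor (G : Hypergraph γ) (F : Hypergraph β) : Prop :=
  ∃ μ : γ → Finset β, IsMinorMap G F μ

/-- The `n×m` grid graph (as a 2-uniform hypergraph on `[n]×[m]`,
zero-indexed): `(i,j)` and `(i',j')` are adjacent iff `|i−i'| + |j−j'| = 1`. -/
def gridGraph (n m : ℕ) : Hypergraph (ℕ × ℕ) where
  verts := Finset.range n ×ˢ Finset.range m
  edges :=
    (((Finset.range n ×ˢ Finset.range m) ×ˢ (Finset.range n ×ˢ Finset.range m)).filter
        fun p => Nat.dist p.1.1 p.2.1 + Nat.dist p.1.2 p.2.2 = 1).image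
      fun p => {p.1, p.2}
  valid := by
    intro e he
    rcases Finset.mem_image.mp he with ⟨p, hp, rfl⟩
    rcases Finset.mem_product.mp (Finset.mem_filter.mp hp).1 with ⟨h1, h2⟩
    intro x hx
    rcases Finset.mem_insert.mp hx with rfl | hx
    · exact h1
    · rw [Finset.mem_singleton] at hx; subst hx; exact h2

/-- The `n×m` jigsaw: the hypergraph dual of the `n×m` grid graph. -/
def jigsaw (n m : ℕ) : Hypergraph (Finset (ℕ × ℕ)) := (gridGraph n m).dual

/-- A path in a hypergraph: an alternating sequence
`v 0, e 0, v 1, …, e (ℓ-1), v ℓ` of pairwise distinct vertices and pairwise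
distinct edges with `{v i, v (i+1)} ⊆ e i`. -/
structure IsHPath (H : Hypergraph α) (ℓ : ℕ) (pv : ℕ → α) (pe : ℕ → Finset α) : Prop where
  vert_mem : ∀ i ≤ ℓ, pv i ∈ H.verts
  edge_mem : ∀ i < ℓ, pe i ∈ H.edges
  vert_inj : ∀ i ≤ ℓ, ∀ j ≤ ℓ, pv i = pv j → i = j
  edge_inj : ∀ i < ℓ, ∀ j < ℓ, pe i = pe j → i = j
  incid : ∀ i < ℓ, pv i ∈ pe i ∧ pv (i + 1) ∈ pe i

/-- An expressive minor map from the graph `G` into the hypergraph `H`,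
together with its edge witness `ρ`. -/
def IsExpressiveMinorMap (G : Hypergraph γ) (H : Hypergraph α)
    (μ : γ → Finset α) (ρ : Finset γ → Finset α) : Prop :=
  IsMinorMap G H μ ∧
  H.verts = G.verts.biUnion μ ∧
  Set.InjOn ρ ↑G.edges ∧
  (∀ e ∈ G.edges, ρ e ∈ H.edges) ∧
  (∀ x y : γ, ({x, y} : Finset γ) ∈ G.edges →
    (∃ a ∈ ρ {x, y}, a ∈ μ x) ∧ ∃ b ∈ ρ {x, y}, b ∈ μ y) ∧
  ∀ e₁ ∈ G.edges, ∀ e₂ ∈ G.edges, e₁ ≠ e₂ → (e₁ ∩ e₂).Nonempty →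
    ∃ (ℓ : ℕ) (pv : ℕ → α) (pe : ℕ → Finset α),
      IsHPath H ℓ pv pe ∧ pv 0 ∈ ρ e₁ ∧ pv ℓ ∈ ρ e₂ ∧
      ∀ i < ℓ, (∃ f ∈ G.edges, pe i = ρ f) →
        (i = 0 ∧ pe i = ρ e₁) ∨ (i = ℓ - 1 ∧ pe i = ρ e₂)

/-- `G` is an expressive minor of `H`. -/
def IsExpressiveMinor (G : Hypergraph γ) (H : Hypergraph α) : Prop :=
  ∃ (μ : γ → Finset α) (ρ : Finset γ → Finset α), IsExpressiveMinorMap G H μ ρ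

/-- A witness that `P` is an `n×m` pre-jigsaw: mappings `π` (here `vmap`) and
`o` (here `emap`) from the `n×m` jigsaw `J` into `P`, together with a fixed
family of connecting paths. -/
structure PreJigsawWitness (n m : ℕ) (P : Hypergraph α) where
  vmap : Finset (ℕ × ℕ) → α
  emap : Finset (Finset (ℕ × ℕ)) → Finset (Finset α)
  plen : Finset (ℕ × ℕ) → Finset (ℕ × ℕ) → Finset (Finset (ℕ × ℕ)) → ℕ
  ppv : Finset (ℕ × ℕ) → Finset (ℕ × ℕ) → Finset (Finset (ℕ × ℕ)) → ℕ → α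
  ppe : Finset (ℕ × ℕ) → Finset (ℕ × ℕ) → Finset (Finset (ℕ × ℕ)) → ℕ → Finset α
  vmap_mem : ∀ u ∈ (jigsaw n m).verts, vmap u ∈ P.verts
  emap_sub : ∀ e ∈ (jigsaw n m).edges, emap e ⊆ P.edges
  emap_disj : ∀ e ∈ (jigsaw n m).edges, ∀ f ∈ (jigsaw n m).edges, e ≠ f →
    emap e ∩ emap f = ∅
  emap_cover : ∀ g ∈ P.edges, ∃ e ∈ (jigsaw n m).edges, g ∈ emap e
  path_isPath : ∀ e ∈ (jigsaw n m).edges, ∀ u ∈ e, ∀ w ∈ e, u ≠ w →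
    IsHPath P (plen u w e) (ppv u w e) (ppe u w e)
  path_start : ∀ e ∈ (jigsaw n m).edges, ∀ u ∈ e, ∀ w ∈ e, u ≠ w →
    ppv u w e 0 = vmap u
  path_end : ∀ e ∈ (jigsaw n m).edges, ∀ u ∈ e, ∀ w ∈ e, u ≠ w →
    ppv u w e (plen u w e) = vmap w
  path_edges : ∀ e ∈ (jigsaw n m).edges, ∀ u ∈ e, ∀ w ∈ e, u ≠ w →
    ∀ i < plen u w e, ppe u w e i ∈ emap e
  path_avoid : ∀ e ∈ (jigsaw n m).edges, ∀ u ∈ e, ∀ w ∈ e, u ≠ w →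
    ∀ i ≤ plen u w e, ∀ z ∈ (jigsaw n m).verts, ppv u w e i = vmap z →
      ppv u w e i = vmap u ∨ ppv u w e i = vmap w
  vert_cover : ∀ x ∈ P.verts,
    (∃ u ∈ (jigsaw n m).verts, vmap u = x) ∨
    ∃ e ∈ (jigsaw n m).edges, ∃ u ∈ e, ∃ w ∈ e, u ≠ w ∧
      ∃ i ≤ plen u w e, ppv u w e i = x

/-- `P` is an `n×m` pre-jigsaw. -/
def IsPreJigsaw (n m : ℕ) (P : Hypergraph α) : Prop :=
  Nonempty (PreJigsawWitness n m P)


/-! ### Auxiliary lemmas for the dilution theorem -/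

lemma ext' {K K' : Hypergraph α} (hv : K.verts = K'.verts)
    (he : K.edges = K'.edges) : K = K' := by
  cases K; cases K'; cases hv; cases he; rfl

/-- Deleting a whole set of vertices. -/
def restrictAway (K : Hypergraph α) (D : Finset α) : Hypergraph α where
  verts := K.verts \ D
  edges := K.edges.image fun e => e \ D
  valid := by
    intro e he
    rcases Finset.mem_image.mp he with ⟨f, hf, rfl⟩
    exact Finset.sdiff_subset_sdiff (K.valid f hf) le_rfl

lemma deleteSet (K : Hypergraph α) (D : Finset α) (hD : D ⊆ K.verts) :
    Relation.ReflTransGen Step K (K.restrictAway D) := by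
  classical
  induction D using Finset.induction generalizing K with
  | empty =>
      have h : K.restrictAway ∅ = K := by
        apply ext' <;> simp [restrictAway]
      rw [h]
  | @insert a D' ha ih =>
      have haK : a ∈ K.verts := hD (Finset.mem_insert_self a D')
      have hst : Step K (K.deleteVertex a) := Step.deleteVertex K a haK
      have hD' : D' ⊆ (K.deleteVertex a).verts := by
        intro d hd
        refine Finset.mem_erase.mpr ⟨?_, hD (Finset.mem_insert_of_mem hd)⟩
        rintro rfl; exact ha hd
      have h2 := ih (K.deleteVertex a) hD'
      have heq : (K.deleteVertex a).restrictAway D' = K.restrictAway (insert a D') := by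
        apply ext'
        · ext x
          simp only [restrictAway, deleteVertex, Finset.mem_sdiff, Finset.mem_erase,
            Finset.mem_insert]
          tauto
        · show ((K.edges.image fun e => e.erase a).image fun e => e \ D') = _
          rw [Finset.image_image]
          apply Finset.image_congr
          intro e _
          ext x
          simp only [Function.comp_apply, Finset.mem_sdiff, Finset.mem_erase,
            Finset.mem_insert]
          tauto
      rw [heq] at h2
      exact Relation.ReflTransGen.head hst h2

/-- Crossing lemma: a path from a `P`-state to a non-`P`-state crosses. -/
lemma exists_crossing {β' : Type*} {r : β' → β' → Prop} {P : β' → Prop} {a b : β'}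
    (h : Relation.ReflTransGen r a b) (hPa : P a) (hPb : ¬ P b) :
    ∃ c d, r c d ∧ P c ∧ ¬ P d := by
  induction h with
  | refl => exact absurd hPa hPb
  | @tail c d hac hcd ih =>
      by_cases hPc : P c
      · exact ⟨c, d, hcd, hPc, hPb⟩
      · exact ih hPc

lemma reflTransGen_closed {β' : Type*} {r : β' → β' → Prop} {P : β' → Prop} {a b : β'}
    (h : Relation.ReflTransGen r a b) (hPa : P a)
    (hcl : ∀ c d, P c → r c d → P d) : P b := by
  induction h with
  | refl => exact hPa
  | @tail c d _ hcd ih => exact hcl c d ih hcd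

lemma mem_incident_iff {K : Hypergraph α} {u : α} {e : Finset α} :
    e ∈ K.incident u ↔ e ∈ K.edges ∧ u ∈ e := Finset.mem_filter

lemma mem_mergedEdge_iff {K : Hypergraph α} {w u : α} :
    u ∈ K.mergedEdge w ↔ u ≠ w ∧ ∃ e ∈ K.incident w, u ∈ e := by
  simp [mergedEdge, Finset.mem_erase, Finset.mem_biUnion]

lemma mergeBranch : ∀ (n : ℕ) (K : Hypergraph α) (R : Finset (Finset α)) (L : Finset α),
    L.card = n →
    R ⊆ K.edges → R.Nonempty → L ⊆ K.verts →
    (∀ w ∈ L, (K.incident w).Nonempty ∧ K.incident w ⊆ R) →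
    (∀ A ⊆ R, A.Nonempty → A ≠ R →
      ∃ w ∈ L, ((K.incident w) ∩ A).Nonempty ∧ ((K.incident w) ∩ (R \ A)).Nonempty) →
    ∃ K', Relation.ReflTransGen Step K K' ∧ K'.verts = K.verts \ L ∧
      K'.edges = (K.edges \ R) ∪ {(R.biUnion id) \ L} := by
  intro n
  induction n with
  | zero =>
      intro K R L hcard hRE hRne _ _ htc
      have hL : L = ∅ := Finset.card_eq_zero.mp hcard
      subst hL
      obtain ⟨r, hr⟩ := hRne
      have hReq : R = {r} := by
        by_contra hne
        obtain ⟨w, hw, -⟩ := htc {r} (Finset.singleton_subset_iff.mpr hr)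
          (Finset.singleton_nonempty r) (fun h => hne h.symm)
        exact absurd hw (Finset.notMem_empty w)
      subst hReq
      refine ⟨K, Relation.ReflTransGen.refl, by simp, ?_⟩
      have h1 : ({r} : Finset (Finset α)).biUnion id \ (∅ : Finset α) = r := by simp
      rw [h1, Finset.sdiff_union_self_eq_union]
      exact (Finset.union_eq_left.mpr (Finset.singleton_subset_iff.mpr (hRE hr))).symm
  | succ n ih =>
      intro K R L hcard hRE hRne hLV hLI htc
      have hLne : L.Nonempty := Finset.card_pos.mp (by omega)
      obtain ⟨w, hwL⟩ := hLne
      set I := K.incident w with hI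
      set m := K.mergedEdge w with hm
      set K₂ := K.merge w with hK₂
      have hIne : I.Nonempty := (hLI w hwL).1
      have hIR : I ⊆ R := (hLI w hwL).2
      have hwv : w ∈ K.verts := hLV hwL
      have hstep : Step K K₂ := Step.merge K w hwv hIne
      have hK2edges : K₂.edges = (K.edges \ I) ∪ {m} := rfl
      have hK2verts : K₂.verts = K.verts.erase w := rfl
      have hwm : w ∉ m := Finset.notMem_erase w _
      set R' := (R \ I) ∪ {m} with hR'
      set L' := L.erase w with hL'
      have hcard' : L'.card = n := by
        rw [hL', Finset.card_erase_of_mem hwL, hcard]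
        omega
      have hmemK2 : ∀ e, e ∈ K₂.edges ↔ ((e ∈ K.edges ∧ e ∉ I) ∨ e = m) := by
        intro e
        rw [hK2edges]
        simp [Finset.mem_union, Finset.mem_sdiff]
        exact or_comm
      have hmK2 : m ∈ K₂.edges := by rw [hmemK2]; exact Or.inr rfl
      have hR'E : R' ⊆ K₂.edges := by
        intro e he
        rcases Finset.mem_union.mp he with he | he
        · rw [hmemK2]
          rcases Finset.mem_sdiff.mp he with ⟨h1, h2⟩
          exact Or.inl ⟨hRE h1, h2⟩
        · rw [Finset.mem_singleton] at he; subst he; exact hmK2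
      have hR'ne : R'.Nonempty := ⟨m, Finset.mem_union_right _ (Finset.mem_singleton_self m)⟩
      have hL'V : L' ⊆ K₂.verts := by
        intro u hu
        rcases Finset.mem_erase.mp hu with ⟨h1, h2⟩
        rw [hK2verts]
        exact Finset.mem_erase.mpr ⟨h1, hLV h2⟩
      have hincK2 : ∀ u e, e ∈ K₂.incident u ↔ (e ∈ K₂.edges ∧ u ∈ e) :=
        fun u e => mem_incident_iff
      have humem : ∀ u, u ≠ w → ∀ e ∈ I, u ∈ e → u ∈ m := by
        intro u hne e heI hue
        rw [hm, mem_mergedEdge_iff]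
        exact ⟨hne, e, heI, hue⟩
      have hL'I : ∀ u ∈ L', (K₂.incident u).Nonempty ∧ K₂.incident u ⊆ R' := by
        intro u hu
        rcases Finset.mem_erase.mp hu with ⟨hune, huL⟩
        constructor
        · obtain ⟨e, he⟩ := (hLI u huL).1
          rcases mem_incident_iff.mp he with ⟨heE, hue⟩
          by_cases heI : e ∈ I
          · exact ⟨m, (hincK2 u m).mpr ⟨hmK2, humem u hune e heI hue⟩⟩
          · exact ⟨e, (hincK2 u e).mpr ⟨(hmemK2 e).mpr (Or.inl ⟨heE, heI⟩), hue⟩⟩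
        · intro e he
          rcases (hincK2 u e).mp he with ⟨heE, hue⟩
          rcases (hmemK2 e).mp heE with ⟨heK, heI⟩ | rfl
          · have : e ∈ K.incident u := mem_incident_iff.mpr ⟨heK, hue⟩
            have heR : e ∈ R := (hLI u huL).2 this
            exact Finset.mem_union_left _ (Finset.mem_sdiff.mpr ⟨heR, heI⟩)
          · exact Finset.mem_union_right _ (Finset.mem_singleton_self _)
      have htc' : ∀ A ⊆ R', A.Nonempty → A ≠ R' →
          ∃ u ∈ L', ((K₂.incident u) ∩ A).Nonempty ∧
            ((K₂.incident u) ∩ (R' \ A)).Nonempty := by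
        intro A hAR' hAne hAneR'
        by_cases hmA : m ∈ A
        · set A' := (A ∩ (R \ I)) ∪ I with hA'
          have hA'R : A' ⊆ R := by
            intro t ht
            rcases Finset.mem_union.mp ht with ht | ht
            · exact (Finset.mem_sdiff.mp (Finset.mem_inter.mp ht).2).1
            · exact hIR ht
          have hA'ne : A'.Nonempty := by
            obtain ⟨i, hi⟩ := hIne
            exact ⟨i, Finset.mem_union_right _ hi⟩
          have hA'neR : A' ≠ R := by
            have hss : A ⊂ R' := lt_of_le_of_ne hAR' hAneR'
            obtain ⟨r, hrR', hrA⟩ := Finset.exists_of_ssubset hss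
            have hrm : r ≠ m := by rintro rfl; exact hrA hmA
            have hrRI : r ∈ R \ I := by
              rcases Finset.mem_union.mp hrR' with h | h
              · exact h
              · exact absurd (Finset.mem_singleton.mp h) hrm
            intro heq
            have : r ∈ A' := heq ▸ (Finset.mem_sdiff.mp hrRI).1
            rcases Finset.mem_union.mp this with h | h
            · exact hrA (Finset.mem_inter.mp h).1
            · exact (Finset.mem_sdiff.mp hrRI).2 h
          obtain ⟨u, huL, ⟨e, he⟩, ⟨e', he'⟩⟩ := htc A' hA'R hA'ne hA'neR
          obtain ⟨heu, heA'⟩ := Finset.mem_inter.mp he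
          obtain ⟨he'u, he'RA'⟩ := Finset.mem_inter.mp he'
          obtain ⟨he'R, he'nA'⟩ := Finset.mem_sdiff.mp he'RA'
          have he'nI : e' ∉ I := fun h => he'nA' (Finset.mem_union_right _ h)
          have hunew : u ≠ w := by
            rintro rfl
            exact he'nI he'u
          refine ⟨u, Finset.mem_erase.mpr ⟨hunew, huL⟩, ?_, ?_⟩
          · by_cases heI : e ∈ I
            · refine ⟨m, Finset.mem_inter.mpr ⟨?_, hmA⟩⟩
              exact (hincK2 u m).mpr ⟨hmK2, humem u hunew e heI (mem_incident_iff.mp heu).2⟩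
            · have heA : e ∈ A := by
                rcases Finset.mem_union.mp heA' with h | h
                · exact (Finset.mem_inter.mp h).1
                · exact absurd h heI
              refine ⟨e, Finset.mem_inter.mpr ⟨?_, heA⟩⟩
              refine (hincK2 u e).mpr ⟨(hmemK2 e).mpr (Or.inl ⟨(mem_incident_iff.mp heu).1, heI⟩),
                (mem_incident_iff.mp heu).2⟩
          · have he'nA : e' ∉ A := by
              intro h
              exact he'nA' (Finset.mem_union_left _ (Finset.mem_inter.mpr
                ⟨h, Finset.mem_sdiff.mpr ⟨he'R, he'nI⟩⟩))
            refine ⟨e', Finset.mem_inter.mpr ⟨?_, Finset.mem_sdiff.mpr ⟨?_, he'nA⟩⟩⟩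
            · exact (hincK2 u e').mpr ⟨(hmemK2 e').mpr
                (Or.inl ⟨(mem_incident_iff.mp he'u).1, he'nI⟩), (mem_incident_iff.mp he'u).2⟩
            · exact Finset.mem_union_left _ (Finset.mem_sdiff.mpr ⟨he'R, he'nI⟩)
        · -- m ∉ A, so A ⊆ R \ I
          have hAsub : A ⊆ R \ I := by
            intro t ht
            rcases Finset.mem_union.mp (hAR' ht) with h | h
            · exact h
            · exact absurd ht (by rw [Finset.mem_singleton.mp h]; exact hmA)
          have hAneR : A ≠ R := by
            obtain ⟨i, hi⟩ := hIne
            intro heq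
            have : i ∈ A := heq ▸ hIR hi
            exact (Finset.mem_sdiff.mp (hAsub this)).2 hi
          obtain ⟨u, huL, ⟨e, he⟩, ⟨e', he'⟩⟩ := htc A
            (fun t ht => (Finset.mem_sdiff.mp (hAsub ht)).1) hAne hAneR
          obtain ⟨heu, heA⟩ := Finset.mem_inter.mp he
          obtain ⟨he'u, he'RA⟩ := Finset.mem_inter.mp he'
          obtain ⟨he'R, he'nA⟩ := Finset.mem_sdiff.mp he'RA
          have heI : e ∉ I := (Finset.mem_sdiff.mp (hAsub heA)).2
          have hunew : u ≠ w := by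
            rintro rfl
            exact heI heu
          refine ⟨u, Finset.mem_erase.mpr ⟨hunew, huL⟩, ?_, ?_⟩
          · refine ⟨e, Finset.mem_inter.mpr ⟨?_, heA⟩⟩
            exact (hincK2 u e).mpr ⟨(hmemK2 e).mpr (Or.inl ⟨(mem_incident_iff.mp heu).1, heI⟩),
              (mem_incident_iff.mp heu).2⟩
          · by_cases he'I : e' ∈ I
            · refine ⟨m, Finset.mem_inter.mpr ⟨?_, Finset.mem_sdiff.mpr ⟨?_, hmA⟩⟩⟩
              · exact (hincK2 u m).mpr ⟨hmK2, humem u hunew e' he'I (mem_incident_iff.mp he'u).2⟩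
              · exact Finset.mem_union_right _ (Finset.mem_singleton_self m)
            · refine ⟨e', Finset.mem_inter.mpr ⟨?_, Finset.mem_sdiff.mpr ⟨?_, he'nA⟩⟩⟩
              · exact (hincK2 u e').mpr ⟨(hmemK2 e').mpr
                  (Or.inl ⟨(mem_incident_iff.mp he'u).1, he'I⟩), (mem_incident_iff.mp he'u).2⟩
              · exact Finset.mem_union_left _ (Finset.mem_sdiff.mpr ⟨he'R, he'I⟩)
      obtain ⟨K', htr', hv', he'⟩ := ih K₂ R' L' hcard' hR'E hR'ne hL'V hL'I htc'
      refine ⟨K', Relation.ReflTransGen.head hstep htr', ?_, ?_⟩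
      · rw [hv', hK2verts]
        ext u
        simp only [Finset.mem_sdiff, Finset.mem_erase, hL']
        constructor
        · rintro ⟨⟨hne, hu⟩, h2⟩
          refine ⟨hu, fun hL => h2 ⟨hne, hL⟩⟩
        · rintro ⟨hu, hnL⟩
          have hne : u ≠ w := by rintro rfl; exact hnL hwL
          exact ⟨⟨hne, hu⟩, fun h => hnL h.2⟩
      · rw [he']
        -- step 1: K₂.edges \ R' = (K.edges \ R) \ {m}
        have hstep1 : K₂.edges \ R' = (K.edges \ R) \ {m} := by
          ext e
          simp only [Finset.mem_sdiff, Finset.mem_singleton]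
          rw [hmemK2]
          constructor
          · rintro ⟨⟨heK, heI⟩ | rfl, h2⟩
            · refine ⟨⟨heK, fun heR => h2 (Finset.mem_union_left _
                (Finset.mem_sdiff.mpr ⟨heR, heI⟩))⟩, ?_⟩
              intro heq
              exact h2 (heq ▸ Finset.mem_union_right _ (Finset.mem_singleton_self m))
            · exact absurd (Finset.mem_union_right _ (Finset.mem_singleton_self m)) h2
          · rintro ⟨⟨heK, heR⟩, hem⟩
            have heI : e ∉ I := fun h => heR (hIR h)
            refine ⟨Or.inl ⟨heK, heI⟩, ?_⟩
            intro h
            rcases Finset.mem_union.mp h with h | h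
            · exact heR (Finset.mem_sdiff.mp h).1
            · exact hem (Finset.mem_singleton.mp h)
        -- step 2: (R'.biUnion id) \ L' = (R.biUnion id) \ L
        have hstep2 : (R'.biUnion id) \ L' = (R.biUnion id) \ L := by
          ext u
          simp only [Finset.mem_sdiff, Finset.mem_biUnion, id, hL', Finset.mem_erase]
          constructor
          · rintro ⟨⟨e, heR', hue⟩, hnL'⟩
            have hcore : (∃ e ∈ R, u ∈ e) ∧ u ≠ w := by
              rcases Finset.mem_union.mp heR' with h | h
              · obtain ⟨heR, heI⟩ := Finset.mem_sdiff.mp h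
                have : u ≠ w := by
                  rintro rfl
                  exact heI (mem_incident_iff.mpr ⟨hRE heR, hue⟩)
                exact ⟨⟨e, heR, hue⟩, this⟩
              · rw [Finset.mem_singleton] at h
                subst h
                obtain ⟨hne, e', he'I, hue'⟩ := mem_mergedEdge_iff.mp hue
                exact ⟨⟨e', hIR he'I, hue'⟩, hne⟩
            exact ⟨hcore.1, fun hL => hnL' ⟨hcore.2, hL⟩⟩
          · rintro ⟨⟨e, heR, hue⟩, hnL⟩
            have hnew : u ≠ w := by rintro rfl; exact hnL hwL
            refine ⟨?_, fun h => hnL h.2⟩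
            by_cases heI : e ∈ I
            · exact ⟨m, Finset.mem_union_right _ (Finset.mem_singleton_self m),
                humem u hnew e heI hue⟩
            · exact ⟨e, Finset.mem_union_left _ (Finset.mem_sdiff.mpr ⟨heR, heI⟩), hue⟩
        rw [hstep1, hstep2]
        -- step 3: collision analysis
        have hcol : m ∈ K.edges \ R → m = (R.biUnion id) \ L := by
          rintro hm'
          obtain ⟨hmE, hmR⟩ := Finset.mem_sdiff.mp hm'
          have hmL : ∀ u ∈ m, u ∉ L := by
            intro u hum huL
            exact hmR ((hLI u huL).2 (mem_incident_iff.mpr ⟨hmE, hum⟩))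
          have hIReq : I = R := by
            by_contra hne
            obtain ⟨u, huL, ⟨e, he⟩, ⟨e', he'⟩⟩ := htc I hIR hIne hne
            obtain ⟨heu, heI⟩ := Finset.mem_inter.mp he
            obtain ⟨he'u, he'RI⟩ := Finset.mem_inter.mp he'
            have hunew : u ≠ w := by
              rintro rfl
              exact (Finset.mem_sdiff.mp he'RI).2 he'u
            have : u ∈ m := humem u hunew e heI (mem_incident_iff.mp heu).2
            exact hmL u this huL
          ext u
          rw [hm, mem_mergedEdge_iff]
          simp only [Finset.mem_sdiff, Finset.mem_biUnion, id]
          constructor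
          · rintro ⟨hne, e, heI, hue⟩
            refine ⟨⟨e, hIR heI, hue⟩, ?_⟩
            exact hmL u (humem u hne e heI hue)
          · rintro ⟨⟨e, heR, hue⟩, hnL⟩
            have hne : u ≠ w := by rintro rfl; exact hnL hwL
            have heI : e ∈ I := by rw [hIReq]; exact heR
            exact ⟨hne, e, heI, hue⟩
        ext e
        simp only [Finset.mem_union, Finset.mem_sdiff, Finset.mem_singleton]
        constructor
        · rintro (⟨⟨h1, h2⟩, -⟩ | h1)
          · exact Or.inl ⟨h1, h2⟩
          · exact Or.inr h1
        · rintro (⟨h1, h2⟩ | h1)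
          · by_cases hem : e = m
            · subst hem
              exact Or.inr (hcol (Finset.mem_sdiff.mpr ⟨h1, h2⟩))
            · exact Or.inl ⟨⟨h1, h2⟩, hem⟩
          · exact Or.inr h1

lemma bijOn_singleton {A : Type*} {B : Type*} (f : A → B) (a : A) (b : B) (h : f a = b) :
    Set.BijOn f {a} {b} := by
  refine ⟨?_, ?_, ?_⟩
  · intro x hx
    rw [Set.mem_singleton_iff] at hx
    subst hx
    rw [Set.mem_singleton_iff]
    exact h
  · intro x hx y hy _
    rw [Set.mem_singleton_iff] at hx hy
    rw [hx, hy]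
  · intro y hy
    rw [Set.mem_singleton_iff] at hy
    exact ⟨a, rfl, by rw [h, hy]⟩

theorem dilutesTo_dual_of_minor_dual (G : Hypergraph γ) (H : Hypergraph α)
    (hG : G.IsGraph) (hGc : G.Connected) (hH : H.degree ≤ 2)
    (hm : IsMinor G H.dual) : H.DilutesTo G.dual := by
  classical
  obtain ⟨μ, hbr, hdisj0, hadj⟩ := hm
  obtain ⟨hGvne, hGconn⟩ := hGc
  -- Basic facts
  have hμE : ∀ x ∈ G.verts, μ x ⊆ H.edges := fun x hx => (hbr x hx).2.1
  have hμne : ∀ x ∈ G.verts, (μ x).Nonempty := fun x hx => (hbr x hx).1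
  have hμconn : ∀ x ∈ G.verts, H.dual.ConnectedIn (μ x) := fun x hx => (hbr x hx).2.2
  have hmemu : ∀ x ∈ G.verts, ∀ z ∈ G.verts, ∀ e : Finset α, e ∈ μ x → e ∈ μ z → x = z := by
    intro x hx z hz e hex hez
    by_contra hne
    have h0 := hdisj0 x hx z hz hne
    have : e ∈ μ x ∩ μ z := Finset.mem_inter.mpr ⟨hex, hez⟩
    rw [h0] at this
    exact absurd this (Finset.notMem_empty e)
  have hfsubV : ∀ f ∈ G.edges, f ⊆ G.verts := G.valid
  have hedge2 : ∀ f ∈ G.edges, ∃ x y, x ≠ y ∧ f = {x, y} := by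
    intro f hf
    obtain ⟨x, y, hxy, hfeq⟩ := Finset.card_eq_two.mp (hG f hf)
    exact ⟨x, y, hxy, hfeq⟩
  have hpair : ∀ f ∈ G.edges, ∀ x y : γ, x ∈ f → y ∈ f → x ≠ y → f = {x, y} := by
    intro f hf x y hx hy hxy
    have hsub : ({x, y} : Finset γ) ⊆ f :=
      Finset.insert_subset_iff.mpr ⟨hx, Finset.singleton_subset_iff.mpr hy⟩
    refine (Finset.eq_of_subset_of_card_le hsub ?_).symm
    rw [Finset.card_pair hxy, hG f hf]
  have hdadjV : ∀ a b : Finset α, H.dual.Adj a b → ∃ v, v ∈ H.verts ∧ a ≠ b ∧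
      H.incident v = {a, b} ∧ a ∈ H.incident v ∧ b ∈ H.incident v := by
    rintro a b ⟨hne, ed, hed, ha, hb⟩
    obtain ⟨v, hvV, rfl⟩ := Finset.mem_image.mp hed
    have hsub : ({a, b} : Finset (Finset α)) ⊆ H.incident v :=
      Finset.insert_subset_iff.mpr ⟨ha, Finset.singleton_subset_iff.mpr hb⟩
    have hIc : (H.incident v).card ≤ 2 :=
      le_trans (Finset.le_sup (f := fun u => (H.incident u).card) hvV) hH
    have heq : ({a, b} : Finset (Finset α)) = H.incident v :=
      Finset.eq_of_subset_of_card_le hsub (by rw [Finset.card_pair hne]; exact hIc)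
    exact ⟨v, hvV, hne, heq.symm, ha, hb⟩
  -- Case 1: G has a single vertex
  by_cases hc1 : G.verts.card = 1
  · obtain ⟨x, hxeq⟩ := Finset.card_eq_one.mp hc1
    have hxv : x ∈ G.verts := by rw [hxeq]; exact Finset.mem_singleton_self x
    have hEemp : G.edges = ∅ := by
      by_contra hne
      obtain ⟨e, he⟩ := Finset.nonempty_iff_ne_empty.mpr hne
      have h2 := hG e he
      have hsub := hfsubV e he
      rw [hxeq] at hsub
      have := Finset.card_le_card hsub
      rw [h2, Finset.card_singleton] at this
      omega
    have hHe : H.edges.Nonempty := by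
      obtain ⟨e, he⟩ := hμne x hxv
      exact ⟨e, hμE x hxv he⟩
    have hchain := deleteSet H H.verts (subset_refl _)
    set K₀ := H.restrictAway H.verts with hK₀
    have hKv : K₀.verts = ∅ := Finset.sdiff_self H.verts
    have hKe : K₀.edges = {∅} := by
      show H.edges.image (fun e => e \ H.verts) = {∅}
      ext E
      simp only [Finset.mem_image, Finset.mem_singleton]
      constructor
      · rintro ⟨e, he, rfl⟩
        exact Finset.sdiff_eq_empty_iff_subset.mpr (H.valid e he)
      · rintro rfl
        obtain ⟨e, he⟩ := hHe
        exact ⟨e, he, Finset.sdiff_eq_empty_iff_subset.mpr (H.valid e he)⟩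
    refine ⟨K₀, hchain, fun _ => ∅, ?_, ?_⟩
    · have h1 : (K₀.verts : Set α) = ∅ := by rw [hKv]; simp
      have h2 : (G.dual.verts : Set (Finset γ)) = ∅ := by
        show ((G.edges : Finset (Finset γ)) : Set (Finset γ)) = ∅
        rw [hEemp]; simp
      rw [h1, h2]
      exact ⟨fun a ha => ha.elim, fun a ha _ _ _ => ha.elim, fun a ha => ha.elim⟩
    · have hix0 : G.incident x = ∅ := by
        show G.edges.filter (fun e => x ∈ e) = ∅
        rw [hEemp]
        rfl
      have h3' : G.dual.edges = {(∅ : Finset (Finset γ))} := by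
        have hde : G.dual.edges = G.verts.image (fun z => G.incident z) := rfl
        rw [hde, hxeq, Finset.image_singleton, hix0]
      have h3 : (G.dual.edges : Set (Finset (Finset γ))) = {(∅ : Finset (Finset γ))} := by
        rw [h3']
        exact Finset.coe_singleton _
      have h4 : (K₀.edges : Set (Finset α)) = {(∅ : Finset α)} := by
        rw [hKe, Finset.coe_singleton]
      rw [h3, h4]
      exact bijOn_singleton _ _ _ (by simp)
  · -- at least two vertices
    have hcard2 : 2 ≤ G.verts.card := by
      obtain ⟨x, hx⟩ := hGvne
      have hpos : 0 < G.verts.card := Finset.card_pos.mpr ⟨x, hx⟩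
      omega
    have hnbr : ∀ x ∈ G.verts, ∃ f ∈ G.edges, x ∈ f := by
      intro x hx
      obtain ⟨y, hy, hyx⟩ := Finset.exists_mem_ne (s := G.verts) (by omega) x
      have hpath := hGconn x hx y hy
      rcases Relation.ReflTransGen.cases_head hpath with heq | ⟨c, ⟨hne, e, he, hxe, _⟩, -⟩
      · exact absurd heq.symm hyx
      · exact ⟨e, he, hxe⟩
    have hconnEx : ∀ f ∈ G.edges, ∃ v, v ∈ H.verts ∧
        (∀ e ∈ H.incident v, ∃ x ∈ f, e ∈ μ x) ∧
        (∀ x ∈ f, ∃ e ∈ H.incident v, e ∈ μ x) := by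
      intro f hf
      obtain ⟨x, y, hxy, rfl⟩ := hedge2 f hf
      have hxf : x ∈ ({x, y} : Finset γ) := Finset.mem_insert_self x {y}
      have hyf : y ∈ ({x, y} : Finset γ) :=
        Finset.mem_insert_of_mem (Finset.mem_singleton_self y)
      have hAdjG : G.Adj x y := ⟨hxy, {x, y}, hf, hxf, hyf⟩
      obtain ⟨a, ha, b, hb, hab⟩ := hadj x y hAdjG
      obtain ⟨v, hvV, hne, hIv, haI, hbI⟩ := hdadjV a b hab
      refine ⟨v, hvV, ?_, ?_⟩
      · intro e he
        rw [hIv] at he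
        rcases Finset.mem_insert.mp he with rfl | he
        · exact ⟨x, hxf, ha⟩
        · rw [Finset.mem_singleton] at he
          subst he
          exact ⟨y, hyf, hb⟩
      · intro z hz
        rcases Finset.mem_insert.mp hz with rfl | hz
        · exact ⟨a, haI, ha⟩
        · rw [Finset.mem_singleton] at hz
          subst hz
          exact ⟨b, hbI, hb⟩
    obtain ⟨x₀, hx₀⟩ := hGvne
    obtain ⟨f₀, hf₀, hx₀f₀⟩ := hnbr x₀ hx₀
    have hαne : Nonempty α := ⟨(hconnEx f₀ hf₀).choose⟩
    obtain ⟨v₀⟩ := hαne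
    have hvcEx : ∀ f : Finset γ, ∃ v : α, f ∈ G.edges → (v ∈ H.verts ∧
        (∀ e ∈ H.incident v, ∃ x ∈ f, e ∈ μ x) ∧
        (∀ x ∈ f, ∃ e ∈ H.incident v, e ∈ μ x)) := by
      intro f
      by_cases hf : f ∈ G.edges
      · obtain ⟨v, hv⟩ := hconnEx f hf
        exact ⟨v, fun _ => hv⟩
      · exact ⟨v₀, fun h => absurd h hf⟩
    choose vc hvc using hvcEx
    have hQ1 : ∀ f ∈ G.edges, vc f ∈ H.verts := fun f hf => (hvc f hf).1
    have hQ2 : ∀ f ∈ G.edges, ∀ e ∈ H.incident (vc f), ∃ x ∈ f, e ∈ μ x :=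
      fun f hf => (hvc f hf).2.1
    have hQ3 : ∀ f ∈ G.edges, ∀ x ∈ f, ∃ e ∈ H.incident (vc f), e ∈ μ x :=
      fun f hf => (hvc f hf).2.2
    have vcinj : ∀ f ∈ G.edges, ∀ f' ∈ G.edges, vc f = vc f' → f = f' := by
      intro f hf f' hf' heq
      apply Finset.Subset.antisymm
      · intro x hx
        obtain ⟨e, heI, hex⟩ := hQ3 f hf x hx
        rw [heq] at heI
        obtain ⟨x', hx'f', hex'⟩ := hQ2 f' hf' e heI
        rwa [hmemu x (hfsubV f hf hx) x' (hfsubV f' hf' hx'f') e hex hex']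
      · intro x hx
        obtain ⟨e, heI, hex⟩ := hQ3 f' hf' x hx
        rw [← heq] at heI
        obtain ⟨x', hx'f, hex'⟩ := hQ2 f hf e heI
        rwa [hmemu x (hfsubV f' hf' hx) x' (hfsubV f hf hx'f) e hex hex']
    by_cases hc2 : G.verts.card = 2
    · -- two vertices: G = K2
      obtain ⟨x, y, hxy, hveq⟩ := Finset.card_eq_two.mp hc2
      have hedgeeq : ∀ e ∈ G.edges, e = {x, y} := by
        intro e he
        refine Finset.eq_of_subset_of_card_le ?_ ?_
        · rw [← hveq]; exact hfsubV e he
        · rw [hG e he, Finset.card_pair hxy]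
      have hf₀eq : f₀ = {x, y} := hedgeeq f₀ hf₀
      set v := vc f₀ with hvdef
      have hvV : v ∈ H.verts := hQ1 f₀ hf₀
      set D := H.verts.erase v with hD
      have hchain := deleteSet H D (Finset.erase_subset v H.verts)
      set K₀ := H.restrictAway D with hK₀
      have hKv : K₀.verts = {v} := by
        show H.verts \ D = {v}
        rw [hD]
        ext u
        simp only [Finset.mem_sdiff, Finset.mem_erase, Finset.mem_singleton]
        constructor
        · rintro ⟨hu, h2⟩
          by_contra hne
          exact h2 ⟨hne, hu⟩
        · rintro rfl
          exact ⟨hvV, fun h => h.1 rfl⟩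
      have hEdd : ∀ e ∈ H.edges, e \ D = if v ∈ e then {v} else ∅ := by
        intro e he
        ext u
        simp only [Finset.mem_sdiff, hD, Finset.mem_erase]
        by_cases hv' : v ∈ e
        · rw [if_pos hv']
          simp only [Finset.mem_singleton]
          constructor
          · rintro ⟨hu, h2⟩
            by_contra hne
            exact h2 ⟨hne, H.valid e he hu⟩
          · rintro rfl
            exact ⟨hv', fun h => h.1 rfl⟩
        · rw [if_neg hv']
          simp only [Finset.notMem_empty, iff_false]
          rintro ⟨hu, h2⟩
          by_cases hu' : u = v
          · subst hu'; exact hv' hu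
          · exact h2 ⟨hu', H.valid e he hu⟩
      have hsingmem : ({v} : Finset α) ∈ K₀.edges := by
        obtain ⟨e, heI, heμ⟩ := hQ3 f₀ hf₀ x (by rw [hf₀eq]; exact Finset.mem_insert_self x {y})
        obtain ⟨heE, hve⟩ := mem_incident_iff.mp heI
        refine Finset.mem_image.mpr ⟨e, heE, ?_⟩
        rw [hEdd e heE, if_pos hve]
      have hKealt : ∀ E ∈ K₀.edges, E = {v} ∨ E = ∅ := by
        intro E hE
        obtain ⟨e, he, rfl⟩ := Finset.mem_image.mp hE
        rw [hEdd e he]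
        split
        · exact Or.inl rfl
        · exact Or.inr rfl
      have hfin : ∃ Kf, Relation.ReflTransGen Step H Kf ∧ Kf.verts = {v} ∧
          Kf.edges = {({v} : Finset α)} := by
        by_cases hemp : (∅ : Finset α) ∈ K₀.edges
        · have hss : (∅ : Finset α) ⊂ {v} := Finset.empty_ssubset.mpr (Finset.singleton_nonempty v)
          have hstep : Step K₀ (K₀.deleteEdge ∅) := Step.deleteSubedge K₀ ∅ {v} hemp hsingmem hss
          refine ⟨K₀.deleteEdge ∅, hchain.tail hstep, hKv, ?_⟩
          show K₀.edges.erase ∅ = {{v}}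
          ext E
          simp only [Finset.mem_erase, Finset.mem_singleton]
          constructor
          · rintro ⟨hne, hE⟩
            rcases hKealt E hE with h | h
            · exact h
            · exact absurd h hne
          · rintro rfl
            exact ⟨Finset.nonempty_iff_ne_empty.mp (Finset.singleton_nonempty v), hsingmem⟩
        · refine ⟨K₀, hchain, hKv, ?_⟩
          ext E
          simp only [Finset.mem_singleton]
          constructor
          · intro hE
            rcases hKealt E hE with h | h
            · exact h
            · rw [h] at hE; exact absurd hE hemp
          · rintro rfl
            exact hsingmem
      obtain ⟨Kf, hchainf, hKfv, hKfe⟩ := hfin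
      have hGedges : G.edges = {({x, y} : Finset γ)} := by
        ext e
        simp only [Finset.mem_singleton]
        constructor
        · exact hedgeeq e
        · rintro rfl
          rw [← hf₀eq]
          exact hf₀
      have hix : ∀ z ∈ ({x, y} : Finset γ), G.incident z = {({x, y} : Finset γ)} := by
        intro z hz
        show G.edges.filter (fun e => z ∈ e) = _
        rw [hGedges, Finset.filter_singleton, if_pos hz]
      refine ⟨Kf, hchainf, fun _ => ({x, y} : Finset γ), ?_, ?_⟩
      · have h1 : (Kf.verts : Set α) = {v} := by rw [hKfv, Finset.coe_singleton]
        have h2 : (G.dual.verts : Set (Finset γ)) = {({x, y} : Finset γ)} := by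
          show ((G.edges : Finset (Finset γ)) : Set (Finset γ)) = _
          rw [hGedges, Finset.coe_singleton]
        rw [h1, h2]
        exact bijOn_singleton _ _ _ rfl
      · have h3 : (Kf.edges : Set (Finset α)) = {({v} : Finset α)} := by
          rw [hKfe, Finset.coe_singleton]
        have himg : ({x, y} : Finset γ).image (fun z => G.incident z) =
              {({({x, y} : Finset γ)} : Finset (Finset γ))} := by
            ext E
            simp only [Finset.mem_image, Finset.mem_singleton]
            constructor
            · rintro ⟨z, hz, rfl⟩
              rw [hix z hz]
            · rintro rfl
              exact ⟨x, Finset.mem_insert_self x {y},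
                hix x (Finset.mem_insert_self x {y})⟩
        have h4' : G.dual.edges = {({({x, y} : Finset γ)} : Finset (Finset γ))} := by
          have hde : G.dual.edges = G.verts.image (fun z => G.incident z) := rfl
          rw [hde, hveq, himg]
        have h4 : (G.dual.edges : Set (Finset (Finset γ))) =
            {({({x, y} : Finset γ)} : Finset (Finset γ))} := by
          rw [h4']
          exact Finset.coe_singleton _
        rw [h3, h4]
        exact bijOn_singleton _ _ _ (by rw [Finset.image_singleton])
    · -- at least three vertices
      have hc3 : 3 ≤ G.verts.card := by omega
      -- ===== setup: links, connectors, kept vertices =====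
      set LX : γ → Finset α :=
        fun x => H.verts.filter (fun w => (H.incident w).Nonempty ∧ H.incident w ⊆ μ x) with hLX
      set S : Finset α := G.edges.image vc with hS
      set W : Finset α := S ∪ G.verts.biUnion LX with hW
      set N : γ → Finset α := fun x => (G.edges.filter (fun f => x ∈ f)).image vc with hN
      have hmemLX : ∀ (x : γ) (w : α), w ∈ LX x ↔
          w ∈ H.verts ∧ (H.incident w).Nonempty ∧ H.incident w ⊆ μ x := by
        intro x w
        simp only [hLX, Finset.mem_filter]
      have hmemS : ∀ u, u ∈ S ↔ ∃ f ∈ G.edges, vc f = u := by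
        intro u
        simp only [hS, Finset.mem_image]
      have hmemW : ∀ u, u ∈ W ↔ (u ∈ S ∨ ∃ z ∈ G.verts, u ∈ LX z) := by
        intro u
        simp only [hW, Finset.mem_union, Finset.mem_biUnion]
      have hmemN : ∀ x u, u ∈ N x ↔ ∃ f, (f ∈ G.edges ∧ x ∈ f) ∧ vc f = u := by
        intro x u
        simp only [hN, Finset.mem_image, Finset.mem_filter]
      have hWV : W ⊆ H.verts := by
        intro u hu
        rcases (hmemW u).mp hu with hu | ⟨z, _, hu⟩
        · obtain ⟨f, hf, rfl⟩ := (hmemS u).mp hu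
          exact hQ1 f hf
        · exact ((hmemLX z u).mp hu).1
      have hSL : ∀ f ∈ G.edges, ∀ x ∈ G.verts, vc f ∉ LX x := by
        intro f hf x hx hmem
        obtain ⟨x₁, x₂, hx12, hfeq⟩ := hedge2 f hf
        obtain ⟨-, -, hsub⟩ := (hmemLX x (vc f)).mp hmem
        have hm₁ : x₁ ∈ f := by rw [hfeq]; exact Finset.mem_insert_self _ _
        have hm₂ : x₂ ∈ f := by
          rw [hfeq]; exact Finset.mem_insert_of_mem (Finset.mem_singleton_self _)
        obtain ⟨e₁, he₁I, he₁⟩ := hQ3 f hf x₁ hm₁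
        obtain ⟨e₂, he₂I, he₂⟩ := hQ3 f hf x₂ hm₂
        have h1 : x = x₁ := hmemu x hx x₁ (hfsubV f hf hm₁) e₁ (hsub he₁I) he₁
        have h2 : x = x₂ := hmemu x hx x₂ (hfsubV f hf hm₂) e₂ (hsub he₂I) he₂
        exact hx12 (h1 ▸ h2 ▸ rfl)
      have hLL : ∀ x ∈ G.verts, ∀ z ∈ G.verts, x ≠ z → ∀ w, w ∈ LX x → w ∈ LX z → False := by
        intro x hx z hz hne w h1 h2
        obtain ⟨-, ⟨e, he⟩, hsub1⟩ := (hmemLX x w).mp h1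
        obtain ⟨-, -, hsub2⟩ := (hmemLX z w).mp h2
        exact hne (hmemu x hx z hz e (hsub1 he) (hsub2 he))
      have htr : ∀ x ∈ G.verts, ∀ e ∈ μ x, ∀ u, u ∈ e ∩ W →
          (u ∈ LX x ∨ ∃ f ∈ G.edges, vc f = u ∧ x ∈ f) := by
        intro x hx e he u hu
        obtain ⟨hue, huW⟩ := Finset.mem_inter.mp hu
        rcases (hmemW u).mp huW with hu' | ⟨z, hz, hu'⟩
        · obtain ⟨f, hf, rfl⟩ := (hmemS u).mp hu'
          have heI : e ∈ H.incident (vc f) := mem_incident_iff.mpr ⟨hμE x hx he, hue⟩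
          obtain ⟨x', hx'f, hex'⟩ := hQ2 f hf e heI
          right
          refine ⟨f, hf, rfl, ?_⟩
          rwa [hmemu x hx x' (hfsubV f hf hx'f) e he hex']
        · obtain ⟨-, -, hsub⟩ := (hmemLX z u).mp hu'
          have heI : e ∈ H.incident u := mem_incident_iff.mpr ⟨hμE x hx he, hue⟩
          have hzx : z = x := hmemu z hz x hx e (hsub heI) he
          left
          rwa [← hzx]
      have hlink : ∀ x ∈ G.verts, ∀ e ∈ μ x, (∃ e' ∈ μ x, e' ≠ e) →
          ∃ v, v ∈ LX x ∧ v ∈ e := by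
        intro x hx e he hex
        obtain ⟨e', he', hne⟩ := hex
        have hpath := hμconn x hx e he e' he'
        rcases Relation.ReflTransGen.cases_head hpath with heq | ⟨c, ⟨hea, hca, hAdj⟩, -⟩
        · exact absurd heq.symm hne
        · obtain ⟨v, hvV, hec, hIv, heI, hcI⟩ := hdadjV e c hAdj
          refine ⟨v, (hmemLX x v).mpr ⟨hvV, ⟨e, heI⟩, ?_⟩, (mem_incident_iff.mp heI).2⟩
          rw [hIv]
          intro t ht
          rcases Finset.mem_insert.mp ht with rfl | ht
          · exact hea
          · rw [Finset.mem_singleton] at ht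
            subst ht
            exact hca
      have htne : ∀ x ∈ G.verts, ∀ e ∈ μ x, (e ∩ W).Nonempty := by
        intro x hx e he
        by_cases hex : ∃ e' ∈ μ x, e' ≠ e
        · obtain ⟨v, hvL, hve⟩ := hlink x hx e he hex
          exact ⟨v, Finset.mem_inter.mpr ⟨hve, (hmemW v).mpr (Or.inr ⟨x, hx, hvL⟩)⟩⟩
        · push_neg at hex
          obtain ⟨f, hf, hxf⟩ := hnbr x hx
          obtain ⟨e', he'I, he'μ⟩ := hQ3 f hf x hxf
          have he'e : e' = e := hex e' he'μ
          refine ⟨vc f, Finset.mem_inter.mpr ⟨?_,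
            (hmemW _).mpr (Or.inl ((hmemS _).mpr ⟨f, hf, rfl⟩))⟩⟩
          rw [← he'e]
          exact (mem_incident_iff.mp he'I).2
      have hkey : ∀ x ∈ G.verts,
          (((μ x).image (fun e => e ∩ W)).biUnion id) \ LX x = N x := by
        intro x hx
        ext u
        simp only [Finset.mem_sdiff, Finset.mem_biUnion, Finset.mem_image, id]
        constructor
        · rintro ⟨⟨E, ⟨e, he, rfl⟩, huE⟩, hnL⟩
          rcases htr x hx e he u huE with h | ⟨f, hf, rfl, hxf⟩
          · exact absurd h hnL
          · exact (hmemN x _).mpr ⟨f, ⟨hf, hxf⟩, rfl⟩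
        · intro hu
          obtain ⟨f, ⟨hf, hxf⟩, rfl⟩ := (hmemN x _).mp hu
          obtain ⟨e, heI, heμ⟩ := hQ3 f hf x hxf
          refine ⟨⟨e ∩ W, ⟨e, heμ, rfl⟩, Finset.mem_inter.mpr ⟨(mem_incident_iff.mp heI).2,
            (hmemW _).mpr (Or.inl ((hmemS _).mpr ⟨f, hf, rfl⟩))⟩⟩, hSL f hf x hx⟩
      have honly : ∀ x ∈ G.verts, ∀ e ∈ μ x, ∀ g₀, g₀ ∈ G.edges → x ∈ g₀ →
          (e ∩ W) ⊆ {vc g₀} → ∀ g ∈ G.edges, x ∈ g → g = g₀ := by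
        intro x hx e he g₀ hg₀ hxg₀ hsub g hg hxg
        have hμsing : ∀ e' ∈ μ x, e' = e := by
          intro e' he'
          by_contra hne
          obtain ⟨v, hvL, hve⟩ := hlink x hx e he ⟨e', he', hne⟩
          have hmem : v ∈ e ∩ W :=
            Finset.mem_inter.mpr ⟨hve, (hmemW v).mpr (Or.inr ⟨x, hx, hvL⟩)⟩
          have := hsub hmem
          rw [Finset.mem_singleton] at this
          rw [this] at hvL
          exact hSL g₀ hg₀ x hx hvL
        obtain ⟨e', he'I, he'μ⟩ := hQ3 g hg x hxg
        have he'e : e' = e := hμsing e' he'μ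
        have hvcg : vc g ∈ e ∩ W := Finset.mem_inter.mpr
          ⟨he'e ▸ (mem_incident_iff.mp he'I).2,
           (hmemW _).mpr (Or.inl ((hmemS _).mpr ⟨g, hg, rfl⟩))⟩
        have := hsub hvcg
        rw [Finset.mem_singleton] at this
        exact vcinj g hg g₀ hg₀ this
      have hverts2 : ∀ x ∈ G.verts, ∀ y ∈ G.verts, x ≠ y → ∀ g₀ ∈ G.edges,
          (∀ g ∈ G.edges, x ∈ g → g = g₀) → (∀ g ∈ G.edges, y ∈ g → g = g₀) → False := by
        intro x hx y hy hxy g₀ hg₀ hax hay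
        obtain ⟨gx, hgx, hxgx⟩ := hnbr x hx
        have hx0 : x ∈ g₀ := (hax gx hgx hxgx) ▸ hxgx
        obtain ⟨gy, hgy, hygy⟩ := hnbr y hy
        have hy0 : y ∈ g₀ := (hay gy hgy hygy) ▸ hygy
        have hg₀eq : g₀ = {x, y} := hpair g₀ hg₀ x y hx0 hy0 hxy
        have hclosed : ∀ z, Relation.ReflTransGen G.Adj x z → z ∈ ({x, y} : Finset γ) := by
          intro z hz
          refine reflTransGen_closed hz (Finset.mem_insert_self x {y}) ?_
          rintro c d hc ⟨hcd, g, hg, hcg, hdg⟩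
          have hgeq : g = g₀ := by
            rcases Finset.mem_insert.mp hc with rfl | hc'
            · exact hax g hg hcg
            · rw [Finset.mem_singleton] at hc'
              subst hc'
              exact hay g hg hcg
          rw [← hg₀eq]
          rw [hgeq] at hdg
          exact hdg
        have hnsub : ¬ G.verts ⊆ ({x, y} : Finset γ) := by
          intro hsub
          have := Finset.card_le_card hsub
          rw [Finset.card_pair hxy] at this
          omega
        obtain ⟨z, hzv, hznot⟩ := Finset.not_subset.mp hnsub
        exact hznot (hclosed z (hGconn x hx z hzv))
      have hbadA : ∀ x ∈ G.verts, ∀ z ∈ G.verts, x ≠ z → ∀ e ∈ μ x, ∀ e' ∈ μ z,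
          e ∩ W = e' ∩ W → False := by
        intro x hx z hz hxz e he e' he' heq
        have helem : ∀ u, u ∈ e ∩ W → ∃ g ∈ G.edges, vc g = u ∧ x ∈ g ∧ z ∈ g := by
          intro u hu
          have hu' : u ∈ e' ∩ W := heq ▸ hu
          rcases htr x hx e he u hu with hL | ⟨f, hf, hvcf, hxf⟩
          · rcases htr z hz e' he' u hu' with hL' | ⟨f', hf', hvc', hzf'⟩
            · exact absurd hL' (fun h => hLL x hx z hz hxz u hL h)
            · rw [← hvc'] at hL
              exact absurd hL (hSL f' hf' x hx)
          · rcases htr z hz e' he' u hu' with hL' | ⟨f', hf', hvc', hzf'⟩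
            · rw [← hvcf] at hL'
              exact absurd hL' (hSL f hf z hz)
            · have hff' : f = f' := vcinj f hf f' hf' (by rw [hvcf, hvc'])
              exact ⟨f, hf, hvcf, hxf, hff' ▸ hzf'⟩
        obtain ⟨u₀, hu₀⟩ := htne x hx e he
        obtain ⟨g₀, hg₀, hvcg₀, hxg₀, hzg₀⟩ := helem u₀ hu₀
        have hsub : e ∩ W ⊆ {vc g₀} := by
          intro u hu
          obtain ⟨g, hg, hvcg, hxg, hzg⟩ := helem u hu
          have hgg : g = g₀ := by
            rw [hpair g hg x z hxg hzg hxz, hpair g₀ hg₀ x z hxg₀ hzg₀ hxz]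
          rw [Finset.mem_singleton, ← hvcg, hgg]
        have hsub' : e' ∩ W ⊆ {vc g₀} := heq ▸ hsub
        exact hverts2 x hx z hz hxz g₀ hg₀
          (honly x hx e he g₀ hg₀ hxg₀ hsub)
          (honly z hz e' he' g₀ hg₀ hzg₀ hsub')
      have hbadB : ∀ x ∈ G.verts, ∀ y ∈ G.verts, x ≠ y → ∀ e ∈ μ x,
          e ∩ W = N y → False := by
        intro x hx y hy hxy e he heq
        have helem : ∀ u, u ∈ e ∩ W → ∃ g ∈ G.edges, vc g = u ∧ x ∈ g ∧ y ∈ g := by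
          intro u hu
          have huN : u ∈ N y := heq ▸ hu
          obtain ⟨g', ⟨hg', hyg'⟩, hvcg'⟩ := (hmemN y u).mp huN
          rcases htr x hx e he u hu with hL | ⟨f, hf, hvcf, hxf⟩
          · rw [← hvcg'] at hL
            exact absurd hL (hSL g' hg' x hx)
          · have hfg : f = g' := vcinj f hf g' hg' (by rw [hvcf, hvcg'])
            exact ⟨f, hf, hvcf, hxf, hfg ▸ hyg'⟩
        obtain ⟨u₀, hu₀⟩ := htne x hx e he
        obtain ⟨g₀, hg₀, hvcg₀, hxg₀, hyg₀⟩ := helem u₀ hu₀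
        have hsub : e ∩ W ⊆ {vc g₀} := by
          intro u hu
          obtain ⟨g, hg, hvcg, hxg, hyg⟩ := helem u hu
          have hgg : g = g₀ := by
            rw [hpair g hg x y hxg hyg hxy, hpair g₀ hg₀ x y hxg₀ hyg₀ hxy]
          rw [Finset.mem_singleton, ← hvcg, hgg]
        have honlyy : ∀ g ∈ G.edges, y ∈ g → g = g₀ := by
          intro g hg hyg
          have h1 : vc g ∈ N y := (hmemN y _).mpr ⟨g, ⟨hg, hyg⟩, rfl⟩
          have h2 : vc g ∈ e ∩ W := by rw [heq]; exact h1
          have := hsub h2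
          rw [Finset.mem_singleton] at this
          exact vcinj g hg g₀ hg₀ this
        exact hverts2 x hx y hy hxy g₀ hg₀ (honly x hx e he g₀ hg₀ hxg₀ hsub) honlyy
      have hjunkW : ∀ e ∈ H.edges, (∀ x ∈ G.verts, e ∉ μ x) → e ∩ W = ∅ := by
        intro e he hjunk
        rw [Finset.eq_empty_iff_forall_notMem]
        intro u hu
        obtain ⟨hue, huW⟩ := Finset.mem_inter.mp hu
        rcases (hmemW u).mp huW with hu' | ⟨z, hz, hu'⟩
        · obtain ⟨f, hf, rfl⟩ := (hmemS u).mp hu'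
          obtain ⟨x, hxf, hex⟩ := hQ2 f hf e (mem_incident_iff.mpr ⟨he, hue⟩)
          exact hjunk x (hfsubV f hf hxf) hex
        · obtain ⟨-, -, hsub⟩ := (hmemLX z u).mp hu'
          exact hjunk z hz (hsub (mem_incident_iff.mpr ⟨he, hue⟩))
      -- ===== phase A : delete everything outside W =====
      set D := H.verts \ W with hD
      have hchain0 := deleteSet H D Finset.sdiff_subset
      set K₀ := H.restrictAway D with hK₀
      have hK₀v : K₀.verts = W := by
        show H.verts \ D = W
        rw [hD, Finset.sdiff_sdiff_self_left]
        exact Finset.inter_eq_right.mpr hWV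
      have hK₀e : K₀.edges = H.edges.image (fun e => e ∩ W) := by
        show H.edges.image (fun e => e \ D) = _
        apply Finset.image_congr
        intro e he
        rw [hD]
        ext u
        simp only [Finset.mem_sdiff, Finset.mem_inter]
        constructor
        · rintro ⟨hue, h2⟩
          refine ⟨hue, by_contra fun hW' => h2 ⟨H.valid e he hue, hW'⟩⟩
        · rintro ⟨hue, huW⟩
          exact ⟨hue, fun h => h.2 huW⟩
      set J := H.edges.filter (fun e => ∀ x ∈ G.verts, e ∉ μ x) with hJ
      -- ===== phase B : merge the branch sets one vertex of G at a time =====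
      have hseq : ∀ Q : Finset γ, Q ⊆ G.verts → ∃ K', Relation.ReflTransGen Step K₀ K' ∧
          K'.verts = W \ Q.biUnion LX ∧
          K'.edges = (J.image (fun e => e ∩ W)) ∪ Q.image N ∪
            ((G.verts \ Q).biUnion (fun z => (μ z).image (fun e => e ∩ W))) := by
        intro Q
        induction Q using Finset.induction with
        | empty =>
            intro _
            refine ⟨K₀, Relation.ReflTransGen.refl, by rw [hK₀v]; simp, ?_⟩
            rw [hK₀e]
            ext E
            constructor
            · intro hE
              obtain ⟨e, he, rfl⟩ := Finset.mem_image.mp hE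
              by_cases hj : ∀ x ∈ G.verts, e ∉ μ x
              · refine Finset.mem_union_left _ (Finset.mem_union_left _ ?_)
                exact Finset.mem_image.mpr ⟨e, Finset.mem_filter.mpr ⟨he, hj⟩, rfl⟩
              · push_neg at hj
                obtain ⟨x, hxv, hxμ⟩ := hj
                refine Finset.mem_union_right _ (Finset.mem_biUnion.mpr
                  ⟨x, Finset.mem_sdiff.mpr ⟨hxv, Finset.notMem_empty x⟩, ?_⟩)
                exact Finset.mem_image.mpr ⟨e, hxμ, rfl⟩
            · intro hE
              rcases Finset.mem_union.mp hE with hE | hE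
              · rcases Finset.mem_union.mp hE with hE | hE
                · obtain ⟨e, heJ, rfl⟩ := Finset.mem_image.mp hE
                  exact Finset.mem_image.mpr ⟨e, (Finset.mem_filter.mp heJ).1, rfl⟩
                · rw [Finset.image_empty] at hE
                  exact absurd hE (Finset.notMem_empty E)
              · obtain ⟨z, hz, hEz⟩ := Finset.mem_biUnion.mp hE
                obtain ⟨e, heμ, rfl⟩ := Finset.mem_image.mp hEz
                exact Finset.mem_image.mpr
                  ⟨e, hμE z (Finset.mem_sdiff.mp hz).1 heμ, rfl⟩
        | @insert x Q' hxQ ihQ =>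
            intro hQsub
            have hxv : x ∈ G.verts := hQsub (Finset.mem_insert_self x Q')
            have hQ'sub : Q' ⊆ G.verts := fun q hq => hQsub (Finset.mem_insert_of_mem hq)
            obtain ⟨K', hchain', hKv', hKe'⟩ := ihQ hQ'sub
            have hRsub : ((μ x).image (fun e => e ∩ W)) ⊆ K'.edges := by
              intro E hE
              rw [hKe']
              exact Finset.mem_union_right _ (Finset.mem_biUnion.mpr
                ⟨x, Finset.mem_sdiff.mpr ⟨hxv, hxQ⟩, hE⟩)
            have hRne : ((μ x).image (fun e => e ∩ W)).Nonempty := (hμne x hxv).image _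
            have hLsub : LX x ⊆ K'.verts := by
              intro w hw
              rw [hKv', Finset.mem_sdiff]
              refine ⟨(hmemW w).mpr (Or.inr ⟨x, hxv, hw⟩), ?_⟩
              intro hmem
              obtain ⟨q, hq, hwq⟩ := Finset.mem_biUnion.mp hmem
              have hqx : q ≠ x := by rintro rfl; exact hxQ hq
              exact hLL x hxv q (hQ'sub hq) (fun h => hqx h.symm) w hw hwq
            have hedge_cases : ∀ E ∈ K'.edges, ∀ w, w ∈ LX x → w ∈ E →
                E ∈ (μ x).image (fun e => e ∩ W) := by
              intro E hE w hw hwE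
              rw [hKe'] at hE
              rcases Finset.mem_union.mp hE with hE | hE
              · rcases Finset.mem_union.mp hE with hE | hE
                · obtain ⟨e, heJ, rfl⟩ := Finset.mem_image.mp hE
                  obtain ⟨heE, hjunk⟩ := Finset.mem_filter.mp heJ
                  rw [hjunkW e heE hjunk] at hwE
                  exact absurd hwE (Finset.notMem_empty w)
                · obtain ⟨q, hq, rfl⟩ := Finset.mem_image.mp hE
                  obtain ⟨f, ⟨hf, hqf⟩, hvcf⟩ := (hmemN q w).mp hwE
                  exact absurd hw (hvcf ▸ hSL f hf x hxv)
              · obtain ⟨z, hz, hEz⟩ := Finset.mem_biUnion.mp hE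
                obtain ⟨hzv, hzQ⟩ := Finset.mem_sdiff.mp hz
                obtain ⟨e, heμ, rfl⟩ := Finset.mem_image.mp hEz
                rcases htr z hzv e heμ w hwE with hL | ⟨f, hf, hvcf, hzf⟩
                · by_cases hzx : z = x
                  · subst hzx
                    exact Finset.mem_image.mpr ⟨e, heμ, rfl⟩
                  · exact absurd hL
                      (fun h => hLL x hxv z hzv (fun hh => hzx hh.symm) w hw h)
                · exact absurd hw (hvcf ▸ hSL f hf x hxv)
            have hLI : ∀ w ∈ LX x, (K'.incident w).Nonempty ∧
                K'.incident w ⊆ (μ x).image (fun e => e ∩ W) := by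
              intro w hw
              constructor
              · obtain ⟨hwv, ⟨e, heI⟩, hsub⟩ := (hmemLX x w).mp hw
                have heμ : e ∈ μ x := hsub heI
                have hEe : (e ∩ W) ∈ K'.edges := hRsub (Finset.mem_image.mpr ⟨e, heμ, rfl⟩)
                exact ⟨e ∩ W, mem_incident_iff.mpr ⟨hEe, Finset.mem_inter.mpr
                  ⟨(mem_incident_iff.mp heI).2, (hmemW w).mpr (Or.inr ⟨x, hxv, hw⟩)⟩⟩⟩
              · intro E hEI
                obtain ⟨hEe, hwE⟩ := mem_incident_iff.mp hEI
                exact hedge_cases E hEe w hw hwE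
            have htcx : ∀ A ⊆ (μ x).image (fun e => e ∩ W), A.Nonempty →
                A ≠ (μ x).image (fun e => e ∩ W) →
                ∃ w ∈ LX x, ((K'.incident w) ∩ A).Nonempty ∧
                  ((K'.incident w) ∩ ((μ x).image (fun e => e ∩ W) \ A)).Nonempty := by
              intro A hAR hAne hAneR
              obtain ⟨a, ha⟩ := hAne
              obtain ⟨e₀, he₀, he₀tr⟩ := Finset.mem_image.mp (hAR ha)
              obtain ⟨t, htR, htA⟩ := Finset.exists_of_ssubset (lt_of_le_of_ne hAR hAneR)
              obtain ⟨e₁, he₁, he₁tr⟩ := Finset.mem_image.mp htR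
              have hP₀ : e₀ ∩ W ∈ A := by rw [he₀tr]; exact ha
              have hP₁ : e₁ ∩ W ∉ A := by rw [he₁tr]; exact htA
              have hpath := hμconn x hxv e₀ he₀ e₁ he₁
              obtain ⟨aa, bb, ⟨haμ, hbμ, hAdj⟩, hPa, hPb⟩ :=
                exists_crossing (P := fun e => e ∩ W ∈ A) hpath hP₀ hP₁
              obtain ⟨v, hvV, hab, hIv, haI, hbI⟩ := hdadjV aa bb hAdj
              have hvL : v ∈ LX x := by
                refine (hmemLX x v).mpr ⟨hvV, ⟨aa, haI⟩, ?_⟩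
                rw [hIv]
                intro t' ht'
                rcases Finset.mem_insert.mp ht' with rfl | ht'
                · exact haμ
                · rw [Finset.mem_singleton] at ht'
                  subst ht'
                  exact hbμ
              refine ⟨v, hvL, ?_, ?_⟩
              · exact ⟨aa ∩ W, Finset.mem_inter.mpr ⟨mem_incident_iff.mpr
                  ⟨hRsub (Finset.mem_image.mpr ⟨aa, haμ, rfl⟩), Finset.mem_inter.mpr
                    ⟨(mem_incident_iff.mp haI).2, (hmemW v).mpr (Or.inr ⟨x, hxv, hvL⟩)⟩⟩,
                  hPa⟩⟩
              · exact ⟨bb ∩ W, Finset.mem_inter.mpr ⟨mem_incident_iff.mpr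
                  ⟨hRsub (Finset.mem_image.mpr ⟨bb, hbμ, rfl⟩), Finset.mem_inter.mpr
                    ⟨(mem_incident_iff.mp hbI).2, (hmemW v).mpr (Or.inr ⟨x, hxv, hvL⟩)⟩⟩,
                  Finset.mem_sdiff.mpr ⟨Finset.mem_image.mpr ⟨bb, hbμ, rfl⟩, hPb⟩⟩⟩
            obtain ⟨K'', hchain'', hKv'', hKe''⟩ :=
              mergeBranch (LX x).card K' ((μ x).image (fun e => e ∩ W)) (LX x) rfl
                hRsub hRne hLsub hLI htcx
            refine ⟨K'', hchain'.trans hchain'', ?_, ?_⟩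
            · rw [hKv'', hKv']
              ext u
              simp only [Finset.mem_sdiff, Finset.mem_biUnion, Finset.mem_insert]
              constructor
              · rintro ⟨⟨huW, h2⟩, h3⟩
                refine ⟨huW, ?_⟩
                rintro ⟨q, (rfl | hq), hu⟩
                · exact h3 hu
                · exact h2 ⟨q, hq, hu⟩
              · rintro ⟨huW, h2⟩
                exact ⟨⟨huW, fun ⟨q, hq, hu⟩ => h2 ⟨q, Or.inr hq, hu⟩⟩,
                  fun hu => h2 ⟨x, Or.inl rfl, hu⟩⟩
            · rw [hKe'', hKe', hkey x hxv]
              ext E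
              constructor
              · intro h
                rcases Finset.mem_union.mp h with h | h
                · obtain ⟨hEold, hER⟩ := Finset.mem_sdiff.mp h
                  rcases Finset.mem_union.mp hEold with h' | h'
                  · rcases Finset.mem_union.mp h' with h'' | h''
                    · exact Finset.mem_union_left _ (Finset.mem_union_left _ h'')
                    · obtain ⟨q, hq, rfl⟩ := Finset.mem_image.mp h''
                      exact Finset.mem_union_left _ (Finset.mem_union_right _
                        (Finset.mem_image.mpr ⟨q, Finset.mem_insert_of_mem hq, rfl⟩))
                  · obtain ⟨z, hz, hEz⟩ := Finset.mem_biUnion.mp h'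
                    obtain ⟨hzv, hzQ⟩ := Finset.mem_sdiff.mp hz
                    have hzx : z ≠ x := by
                      rintro rfl
                      exact hER hEz
                    refine Finset.mem_union_right _ (Finset.mem_biUnion.mpr
                      ⟨z, Finset.mem_sdiff.mpr ⟨hzv, ?_⟩, hEz⟩)
                    intro hm
                    rcases Finset.mem_insert.mp hm with rfl | hm
                    · exact hzx rfl
                    · exact hzQ hm
                · rw [Finset.mem_singleton] at h
                  subst h
                  exact Finset.mem_union_left _ (Finset.mem_union_right _
                    (Finset.mem_image.mpr ⟨x, Finset.mem_insert_self x Q', rfl⟩))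
              · intro h
                rcases Finset.mem_union.mp h with h | h
                · rcases Finset.mem_union.mp h with h | h
                  · refine Finset.mem_union_left _ (Finset.mem_sdiff.mpr
                      ⟨Finset.mem_union_left _ (Finset.mem_union_left _ h), ?_⟩)
                    obtain ⟨e, heJ, rfl⟩ := Finset.mem_image.mp h
                    obtain ⟨heE, hjunk⟩ := Finset.mem_filter.mp heJ
                    rw [hjunkW e heE hjunk]
                    intro hER
                    obtain ⟨e', he', htr'⟩ := Finset.mem_image.mp hER
                    exact (htne x hxv e' he').ne_empty htr'
                  · obtain ⟨q, hq', rfl⟩ := Finset.mem_image.mp h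
                    rcases Finset.mem_insert.mp hq' with rfl | hq
                    · exact Finset.mem_union_right _ (Finset.mem_singleton_self _)
                    · refine Finset.mem_union_left _ (Finset.mem_sdiff.mpr
                        ⟨Finset.mem_union_left _ (Finset.mem_union_right _
                          (Finset.mem_image.mpr ⟨q, hq, rfl⟩)), ?_⟩)
                      intro hER
                      obtain ⟨e, heμ, htr'⟩ := Finset.mem_image.mp hER
                      exact hbadB x hxv q (hQ'sub hq)
                        (by rintro rfl; exact hxQ hq) e heμ htr'
                · obtain ⟨z, hz, hEz⟩ := Finset.mem_biUnion.mp h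
                  obtain ⟨hzv, hzQ'⟩ := Finset.mem_sdiff.mp hz
                  have hzx : z ≠ x := fun hh => hzQ' (hh ▸ Finset.mem_insert_self x Q')
                  have hzQ : z ∉ Q' := fun hh => hzQ' (Finset.mem_insert_of_mem hh)
                  refine Finset.mem_union_left _ (Finset.mem_sdiff.mpr
                    ⟨Finset.mem_union_right _ (Finset.mem_biUnion.mpr
                      ⟨z, Finset.mem_sdiff.mpr ⟨hzv, hzQ⟩, hEz⟩), ?_⟩)
                  intro hER
                  obtain ⟨e, heμ, htr'⟩ := Finset.mem_image.mp hER
                  obtain ⟨e', he'μ, htr''⟩ := Finset.mem_image.mp hEz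
                  exact hbadA x hxv z hzv (fun hh => hzx hh.symm) e heμ e' he'μ
                    (by rw [htr', htr''])
      -- ===== wrap up =====
      obtain ⟨K', hchain', hKv', hKe'⟩ := hseq G.verts (subset_refl _)
      have hKvS : K'.verts = S := by
        rw [hKv']
        ext u
        simp only [Finset.mem_sdiff, Finset.mem_biUnion]
        constructor
        · rintro ⟨huW, h2⟩
          rcases (hmemW u).mp huW with h | ⟨z, hz, h⟩
          · exact h
          · exact absurd h (fun hh => h2 ⟨z, hz, hh⟩)
        · intro huS
          refine ⟨(hmemW u).mpr (Or.inl huS), ?_⟩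
          rintro ⟨z, hz, hu⟩
          obtain ⟨f, hf, rfl⟩ := (hmemS u).mp huS
          exact hSL f hf z hz hu
      have hKeE : K'.edges = (J.image (fun e => e ∩ W)) ∪ G.verts.image N := by
        rw [hKe', Finset.sdiff_self, Finset.biUnion_empty, Finset.union_empty]
      have hNne : ∀ x ∈ G.verts, (N x).Nonempty := by
        intro x hx
        obtain ⟨f, hf, hxf⟩ := hnbr x hx
        exact ⟨vc f, (hmemN x _).mpr ⟨f, ⟨hf, hxf⟩, rfl⟩⟩
      have hfin : ∃ Kf, Relation.ReflTransGen Step H Kf ∧ Kf.verts = S ∧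
          Kf.edges = G.verts.image N := by
        by_cases hemp : (∅ : Finset α) ∈ K'.edges
        · have hNx₀ : N x₀ ∈ K'.edges := by
            rw [hKeE]
            exact Finset.mem_union_right _ (Finset.mem_image.mpr ⟨x₀, hx₀, rfl⟩)
          have hss : (∅ : Finset α) ⊂ N x₀ := Finset.empty_ssubset.mpr (hNne x₀ hx₀)
          have hstep : Step K' (K'.deleteEdge ∅) := Step.deleteSubedge K' ∅ (N x₀) hemp hNx₀ hss
          refine ⟨K'.deleteEdge ∅, (hchain0.trans hchain').tail hstep, hKvS, ?_⟩
          show K'.edges.erase ∅ = _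
          rw [hKeE]
          ext E
          simp only [Finset.mem_erase, Finset.mem_union]
          constructor
          · rintro ⟨hne, h | h⟩
            · obtain ⟨e, heJ, rfl⟩ := Finset.mem_image.mp h
              obtain ⟨heE, hjunk⟩ := Finset.mem_filter.mp heJ
              exact absurd (hjunkW e heE hjunk) hne
            · exact h
          · intro h
            obtain ⟨x, hx, rfl⟩ := Finset.mem_image.mp h
            exact ⟨(hNne x hx).ne_empty, Or.inr h⟩
        · refine ⟨K', hchain0.trans hchain', hKvS, ?_⟩
          have hJemp : J.image (fun e => e ∩ W) = ∅ := by
            rw [Finset.eq_empty_iff_forall_notMem]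
            intro E hE
            have hE' : E ∈ K'.edges := by
              rw [hKeE]
              exact Finset.mem_union_left _ hE
            obtain ⟨e, heJ, rfl⟩ := Finset.mem_image.mp hE
            obtain ⟨heE, hjunk⟩ := Finset.mem_filter.mp heJ
            rw [hjunkW e heE hjunk] at hE'
            exact hemp hE'
          rw [hKeE, hJemp, Finset.empty_union]
      obtain ⟨Kf, hchainf, hKfv, hKfe⟩ := hfin
      -- ===== the isomorphism =====
      set φ : α → Finset γ := fun a => (G.edges.filter (fun f => vc f = a)).biUnion id with hφdef
      have hφ : ∀ f ∈ G.edges, φ (vc f) = f := by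
        intro f hf
        simp only [hφdef]
        have hfl : G.edges.filter (fun g => vc g = vc f) = {f} := by
          ext g
          simp only [Finset.mem_filter, Finset.mem_singleton]
          constructor
          · rintro ⟨hg, heq⟩
            exact vcinj g hg f hf heq
          · rintro rfl
            exact ⟨hf, rfl⟩
        rw [hfl, Finset.singleton_biUnion]
        rfl
      have himN : ∀ y : γ, (N y).image φ = G.incident y := by
        intro y
        simp only [hN]
        rw [Finset.image_image]
        have hcongr : Finset.image (φ ∘ vc) (G.edges.filter (fun f => y ∈ f)) =
            Finset.image id (G.edges.filter (fun f => y ∈ f)) :=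
          Finset.image_congr (fun f hfm => hφ f (Finset.mem_filter.mp hfm).1)
        rw [hcongr, Finset.image_id]
        rfl
      refine ⟨Kf, hchainf, φ, ⟨?_, ?_, ?_⟩, ⟨?_, ?_, ?_⟩⟩
      · intro a ha
        rw [hKfv] at ha
        obtain ⟨f, hf, rfl⟩ := (hmemS a).mp (Finset.mem_coe.mp ha)
        show φ (vc f) ∈ (G.dual.verts : Set (Finset γ))
        rw [hφ f hf]
        exact Finset.mem_coe.mpr hf
      · intro a ha b hb heq
        rw [hKfv] at ha hb
        obtain ⟨f, hf, rfl⟩ := (hmemS a).mp (Finset.mem_coe.mp ha)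
        obtain ⟨g, hg, rfl⟩ := (hmemS b).mp (Finset.mem_coe.mp hb)
        rw [hφ f hf, hφ g hg] at heq
        rw [heq]
      · intro f hf
        have hf' : f ∈ G.edges := Finset.mem_coe.mp hf
        exact ⟨vc f, by rw [hKfv]; exact Finset.mem_coe.mpr ((hmemS _).mpr ⟨f, hf', rfl⟩),
          hφ f hf'⟩
      · intro E hE
        rw [hKfe] at hE
        obtain ⟨x, hx, rfl⟩ := Finset.mem_image.mp (Finset.mem_coe.mp hE)
        show (N x).image φ ∈ (G.dual.edges : Set (Finset (Finset γ)))
        rw [himN x]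
        exact Finset.mem_coe.mpr (Finset.mem_image.mpr ⟨x, hx, rfl⟩)
      · intro E hE E' hE' heq
        rw [hKfe] at hE hE'
        obtain ⟨x, hx, rfl⟩ := Finset.mem_image.mp (Finset.mem_coe.mp hE)
        obtain ⟨x', hx', rfl⟩ := Finset.mem_image.mp (Finset.mem_coe.mp hE')
        have heq' : (N x).image φ = (N x').image φ := heq
        rw [himN x, himN x'] at heq'
        have hNinc : ∀ y, N y = (G.incident y).image vc := fun y => rfl
        rw [hNinc x, hNinc x', heq']
      · intro ed hed
        obtain ⟨x, hx, rfl⟩ := Finset.mem_image.mp (Finset.mem_coe.mp hed)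
        refine ⟨N x, ?_, himN x⟩
        rw [hKfe]
        exact Finset.mem_coe.mpr (Finset.mem_image.mpr ⟨x, hx, rfl⟩)





end Hypergraph

end DilutionPaper
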